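/- There is an absolute constant C > 0 such that for every N ∈ ℕ and all complex numbers x₁, …, x_N, the Rademacher sum S_N(t) = Σ_{n=1}^N xₙ rₙ(t) on [0,1] satisfies ‖S_N‖_{L²[0,1]} ≤ C · ‖S_N‖_{L¹[0,1]}; equivalently, (Σ_{n=1}^N |xₙ|²)^{1/2} ≤ C · ∫₀¹ |Σ_{n=1}^N xₙ rₙ(t)| dt. -/

import Mathlib

open MeasureTheory ProbabilityTheory Filter
open scoped ENNReal NNReal

noncomputable section

/-- The `n`-th Rademacher function on `[0,1]`. -/
def rademacher (n : ℕ) (t : ℝ) : ℝ := Real.sign (Real.sin (2 * Real.pi * 2 ^ n * t))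

/-- Lebesgue measure restricted to `[0,1]`, a probability measure. -/
def unitMeasure : Measure ℝ := volume.restrict (Set.Icc 0 1)

/-- A Young (Orlicz) function: convex on `[0,∞)`, nonnegative there, with
`ψ x / x → ∞` as `x → ∞` and `ψ x / x → 0` as `x → 0⁺`. -/
def IsYoungFunction (ψ : ℝ → ℝ) : Prop :=
  ConvexOn ℝ (Set.Ici 0) ψ ∧ (∀ x ∈ Set.Ici (0 : ℝ), 0 ≤ ψ x) ∧
    Tendsto (fun x => ψ x / x) atTop atTop ∧
    Tendsto (fun x => ψ x / x) (nhdsWithin 0 (Set.Ioi 0)) (nhds 0)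

/-- The Luxemburg norm `inf {λ > 0 : ∫ ψ (|f| / λ) dμ ≤ 1}` (equal to `∞` if no such `λ`). -/
def luxemburgNorm {Y : Type*} [MeasurableSpace Y] (ψ : ℝ → ℝ) (μ : Measure Y) (f : Y → ℝ) :
    ℝ≥0∞ :=
  sInf {l : ℝ≥0∞ | 0 < l ∧ l ≠ ∞ ∧ ∫⁻ y, ENNReal.ofReal (ψ (|f y| / l.toReal)) ∂μ ≤ 1}

/-- The distribution function `d_f(λ) = μ {|f| > λ}`. -/
def distribFn {Y : Type*} [MeasurableSpace Y] (μ : Measure Y) (f : Y → ℝ) (l : ℝ) : ℝ≥0∞ :=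
  μ {y | l < |f y|}

/-- The decreasing rearrangement `f^*(t) = inf {λ > 0 : d_f(λ) ≤ t}` (equal to `∞` if no such `λ`). -/
def decRearrangement {Y : Type*} [MeasurableSpace Y] (μ : Measure Y) (f : Y → ℝ) (t : ℝ) :
    ℝ≥0∞ :=
  sInf {l : ℝ≥0∞ | 0 < l ∧ l ≠ ∞ ∧ distribFn μ f l.toReal ≤ ENNReal.ofReal t}

/-- The Lorentz norm `‖f‖_{L^{p,q}}`. -/
def lorentzNorm {Y : Type*} [MeasurableSpace Y] (μ : Measure Y) (f : Y → ℝ) (p : ℝ)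
    (q : ℝ≥0∞) : ℝ≥0∞ :=
  if q = ∞ then ⨆ t : Set.Ioi (0 : ℝ), ENNReal.ofReal ((t : ℝ) ^ (1 / p)) * decRearrangement μ f t
  else (∫⁻ t in Set.Ioi (0 : ℝ),
      (ENNReal.ofReal (t ^ (1 / p)) * decRearrangement μ f t) ^ q.toReal / ENNReal.ofReal t) ^
      (1 / q.toReal)


namespace RadAux
open Finset


lemma floor_bounds (d j : ℕ) (u : ℝ) (h1 : (j:ℝ)/2^d < u) (h2 : u < ((j:ℝ)+1)/2^d) :
    (↑(j / 2 ^ d) : ℝ) < u ∧ u < ↑(j / 2 ^ d) + 1 := by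
  have hd : (0:ℝ) < 2 ^ d := by positivity
  constructor
  · calc (↑(j/2^d):ℝ) ≤ (j:ℝ)/2^d := by
          rw [le_div_iff₀ hd]
          exact_mod_cast Nat.div_mul_le_self j (2^d)
      _ < u := h1
  · have hmod := Nat.mod_lt j (show 0 < 2^d by positivity)
    have hdm := Nat.div_add_mod j (2^d)
    have hj : j + 1 ≤ (j/2^d + 1) * 2^d := by nlinarith [hmod, hdm]
    calc u < ((j:ℝ)+1)/2^d := h2
      _ ≤ ((↑(j/2^d) + 1) * 2^d)/2^d := by
          gcongr
          exact_mod_cast hj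
      _ = ↑(j/2^d) + 1 := by field_simp

lemma sign_sin (q : ℕ) (u : ℝ) (h1 : (q:ℝ) < u) (h2 : u < q + 1) :
    Real.sign (Real.sin (Real.pi * u)) = (-1) ^ q := by
  have hs : Real.sin (Real.pi * u) = (-1:ℝ) ^ q * Real.sin (Real.pi * (u - q)) := by
    have h := Real.sin_add_int_mul_pi (Real.pi * (u - q)) (q : ℤ)
    rw [zpow_natCast] at h
    rw [← h]; congr 1; push_cast; ring
  have hpos : 0 < Real.sin (Real.pi * (u - q)) := by
    apply Real.sin_pos_of_pos_of_lt_pi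
    · nlinarith [Real.pi_pos]
    · nlinarith [Real.pi_pos]
  rcases Nat.even_or_odd q with he | ho
  · rw [hs, he.neg_one_pow, one_mul, Real.sign_of_pos hpos]
  · rw [hs, ho.neg_one_pow, neg_one_mul, Real.sign_of_neg (by linarith)]

lemma rademacher_eq (k M j : ℕ) (hk : k + 1 ≤ M) (t : ℝ)
    (h1 : (j:ℝ)/2^M < t) (h2 : t < ((j:ℝ)+1)/2^M) :
    rademacher k t = (-1) ^ (j / 2 ^ (M - (k+1))) := by
  set d := M - (k+1) with hd
  have hM : M = k + 1 + d := by omega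
  have hpos : (0:ℝ) < 2 ^ (k+1) := by positivity
  have e : ∀ y : ℝ, 2 ^ (k+1) * (y / 2 ^ M) = y / 2 ^ d := by
    intro y
    rw [hM, pow_add]
    field_simp
    ring
  have hu1 : (j:ℝ)/2^d < 2 ^ (k+1) * t := by
    have := mul_lt_mul_of_pos_left h1 hpos
    rwa [e] at this
  have hu2 : 2 ^ (k+1) * t < ((j:ℝ)+1)/2^d := by
    have := mul_lt_mul_of_pos_left h2 hpos
    rwa [e] at this
  obtain ⟨hb1, hb2⟩ := floor_bounds d j _ hu1 hu2
  have harg : 2 * Real.pi * 2 ^ k * t = Real.pi * (2 ^ (k+1) * t) := by ring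
  rw [rademacher, harg, sign_sin _ _ hb1 hb2]



def S (N : ℕ) (a : Fin N → ℝ) (j : ℕ) : ℝ :=
  ∑ n : Fin N, a n * (-1 : ℝ) ^ (j / 2 ^ (N - 1 - n.1))

lemma S_succ_lo (N : ℕ) (a : Fin (N+1) → ℝ) (j : ℕ) (hj : j < 2 ^ N) :
    S (N+1) a j = a 0 + S N (fun n => a n.succ) j := by
  rw [S, S, Fin.sum_univ_succ]
  congr 1
  · have h0 : j / 2 ^ (N + 1 - 1 - (0 : Fin (N+1)).1) = 0 := by
      apply Nat.div_eq_of_lt; simpa using hj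
    rw [h0, pow_zero, mul_one]
  · apply Finset.sum_congr rfl
    intro n _
    have : N + 1 - 1 - (Fin.succ n).1 = N - 1 - n.1 := by
      have := n.2; simp [Fin.val_succ]; omega
    rw [this]

lemma S_succ_hi (N : ℕ) (a : Fin (N+1) → ℝ) (j : ℕ) (hj : j < 2 ^ N) :
    S (N+1) a (2 ^ N + j) = -a 0 + S N (fun n => a n.succ) j := by
  rw [S, S, Fin.sum_univ_succ]
  congr 1
  · have h0 : (2 ^ N + j) / 2 ^ (N + 1 - 1 - (0 : Fin (N+1)).1) = 1 := by
      simp only [Fin.val_zero, Nat.add_sub_cancel, Nat.sub_zero]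
      rw [Nat.add_comm, Nat.add_div_right j (by positivity), Nat.div_eq_of_lt hj]
    rw [h0, pow_one, mul_neg_one]
  · apply Finset.sum_congr rfl
    intro n _
    have hn := n.2
    have hexp : N + 1 - 1 - (Fin.succ n).1 = N - 1 - n.1 := by
      simp [Fin.val_succ]; omega
    rw [hexp]
    set d := N - 1 - n.1 with hd
    have hdN : d ≤ N := by omega
    have hsplit : (2 ^ N + j) / 2 ^ d = 2 ^ (N - d) + j / 2 ^ d := by
      have : (2:ℕ) ^ N = 2 ^ d * 2 ^ (N - d) := by rw [← pow_add]; congr 1; omega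
      rw [this, Nat.mul_add_div (by positivity)]
    have heven : Even (2 ^ (N - d)) := by
      refine Nat.even_pow.mpr ⟨even_two, by omega⟩
    rw [hsplit, pow_add, heven.neg_one_pow, one_mul]

lemma sum_sq (N : ℕ) (a : Fin N → ℝ) :
    ∑ j ∈ range (2 ^ N), S N a j ^ 2 = 2 ^ N * ∑ n, a n ^ 2 := by
  induction N with
  | zero => simp [S]
  | succ N ih =>
    have h : (2:ℕ) ^ (N+1) = 2 ^ N + 2 ^ N := by ring
    rw [h, Finset.sum_range_add, ← Finset.sum_add_distrib]
    have e1 : ∀ j ∈ range (2^N), S (N+1) a j ^ 2 + S (N+1) a (2^N + j) ^ 2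
        = 2 * a 0 ^ 2 + 2 * S N (fun n => a n.succ) j ^ 2 := by
      intro j hj
      rw [S_succ_lo N a j (mem_range.mp hj), S_succ_hi N a j (mem_range.mp hj)]
      ring
    rw [Finset.sum_congr rfl e1, Finset.sum_add_distrib, Finset.sum_const, card_range,
      ← Finset.mul_sum, ih, Fin.sum_univ_succ]
    push_cast
    ring

lemma sum_quartic (N : ℕ) (a : Fin N → ℝ) :
    ∑ j ∈ range (2 ^ N), S N a j ^ 4 ≤ 3 * 2 ^ N * (∑ n, a n ^ 2) ^ 2 := by
  induction N with
  | zero => simp [S]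
  | succ N ih =>
    have h : (2:ℕ) ^ (N+1) = 2 ^ N + 2 ^ N := by ring
    rw [h, Finset.sum_range_add, ← Finset.sum_add_distrib]
    have e1 : ∀ j ∈ range (2^N), S (N+1) a j ^ 4 + S (N+1) a (2^N + j) ^ 4
        = 2 * S N (fun n => a n.succ) j ^ 4
          + 12 * a 0 ^ 2 * S N (fun n => a n.succ) j ^ 2 + 2 * a 0 ^ 4 := by
      intro j hj
      rw [S_succ_lo N a j (mem_range.mp hj), S_succ_hi N a j (mem_range.mp hj)]
      ring
    rw [Finset.sum_congr rfl e1]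
    have hsplit : ∑ j ∈ range (2^N), (2 * S N (fun n => a n.succ) j ^ 4
          + 12 * a 0 ^ 2 * S N (fun n => a n.succ) j ^ 2 + 2 * a 0 ^ 4)
        = 2 * (∑ j ∈ range (2^N), S N (fun n => a n.succ) j ^ 4)
          + 12 * a 0 ^ 2 * (∑ j ∈ range (2^N), S N (fun n => a n.succ) j ^ 2)
          + 2 ^ N * (2 * a 0 ^ 4) := by
      rw [Finset.sum_add_distrib, Finset.sum_add_distrib, ← Finset.mul_sum, ← Finset.mul_sum,
        Finset.sum_const, card_range, nsmul_eq_mul]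
      push_cast; ring
    rw [hsplit, sum_sq N (fun n => a n.succ), Fin.sum_univ_succ]
    have hA : (0:ℝ) ≤ ∑ n : Fin N, a n.succ ^ 2 :=
      Finset.sum_nonneg fun _ _ => sq_nonneg _
    have hK : (0:ℝ) < 2 ^ N := by positivity
    have ih' := ih (fun n => a n.succ)
    have h2 : (2:ℝ) ^ (N+1) = 2 * 2 ^ N := by ring
    rw [h2]
    nlinarith [ih', mul_nonneg hK.le (sq_nonneg (a 0 ^ 2)),
      mul_nonneg hK.le (mul_nonneg (sq_nonneg (a 0)) hA), mul_nonneg hK.le (mul_nonneg hA hA)]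

def Sc (N : ℕ) (x : Fin N → ℂ) (j : ℕ) : ℂ :=
  ∑ n : Fin N, x n * (((-1 : ℝ) ^ (j / 2 ^ (N - 1 - n.1)) : ℝ) : ℂ)

lemma Sc_re (N : ℕ) (x : Fin N → ℂ) (j : ℕ) :
    (Sc N x j).re = S N (fun n => (x n).re) j := by
  rw [Sc, Complex.re_sum, S]
  apply Finset.sum_congr rfl
  intro n _
  set r : ℝ := (-1 : ℝ) ^ (j / 2 ^ (N - 1 - n.1)) with hr
  simp [Complex.mul_re]

lemma Sc_im (N : ℕ) (x : Fin N → ℂ) (j : ℕ) :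
    (Sc N x j).im = S N (fun n => (x n).im) j := by
  rw [Sc, Complex.im_sum, S]
  apply Finset.sum_congr rfl
  intro n _
  set r : ℝ := (-1 : ℝ) ^ (j / 2 ^ (N - 1 - n.1)) with hr
  simp [Complex.mul_im]

lemma sum_abs_sq (N : ℕ) (x : Fin N → ℂ) :
    ∑ j ∈ range (2 ^ N), ‖Sc N x j‖ ^ 2
      = 2 ^ N * ∑ n, ‖x n‖ ^ 2 := by
  have e : ∀ j, ‖Sc N x j‖ ^ 2
      = S N (fun n => (x n).re) j ^ 2 + S N (fun n => (x n).im) j ^ 2 := by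
    intro j
    rw [Complex.sq_norm, Complex.normSq_apply, Sc_re, Sc_im]
    ring
  simp_rw [e]
  rw [Finset.sum_add_distrib, sum_sq, sum_sq, ← mul_add]
  congr 1
  rw [← Finset.sum_add_distrib]
  apply Finset.sum_congr rfl
  intro n _
  rw [Complex.sq_norm, Complex.normSq_apply]
  ring

lemma sum_abs_quartic (N : ℕ) (x : Fin N → ℂ) :
    ∑ j ∈ range (2 ^ N), ‖Sc N x j‖ ^ 4
      ≤ 6 * 2 ^ N * (∑ n, ‖x n‖ ^ 2) ^ 2 := by
  have e : ∀ j, ‖Sc N x j‖ ^ 4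
      ≤ 2 * (S N (fun n => (x n).re) j ^ 4 + S N (fun n => (x n).im) j ^ 4) := by
    intro j
    have h : ‖Sc N x j‖ ^ 2
        = S N (fun n => (x n).re) j ^ 2 + S N (fun n => (x n).im) j ^ 2 := by
      rw [Complex.sq_norm, Complex.normSq_apply, Sc_re, Sc_im]; ring
    have h4 : ‖Sc N x j‖ ^ 4 = (‖Sc N x j‖ ^ 2) ^ 2 := by ring
    rw [h4, h]
    nlinarith [sq_nonneg (S N (fun n => (x n).re) j ^ 2 - S N (fun n => (x n).im) j ^ 2)]
  calc ∑ j ∈ range (2 ^ N), ‖Sc N x j‖ ^ 4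
      ≤ ∑ j ∈ range (2 ^ N), 2 * (S N (fun n => (x n).re) j ^ 4
          + S N (fun n => (x n).im) j ^ 4) := Finset.sum_le_sum fun j _ => e j
    _ = 2 * ((∑ j ∈ range (2 ^ N), S N (fun n => (x n).re) j ^ 4)
          + ∑ j ∈ range (2 ^ N), S N (fun n => (x n).im) j ^ 4) := by
        rw [← Finset.mul_sum, Finset.sum_add_distrib]
    _ ≤ 6 * 2 ^ N * (∑ n, ‖x n‖ ^ 2) ^ 2 := by
        have hre := sum_quartic N (fun n => (x n).re)
        have him := sum_quartic N (fun n => (x n).im)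
        have hA : (0:ℝ) ≤ ∑ n, (x n).re ^ 2 := Finset.sum_nonneg fun _ _ => sq_nonneg _
        have hB : (0:ℝ) ≤ ∑ n, (x n).im ^ 2 := Finset.sum_nonneg fun _ _ => sq_nonneg _
        have habs : ∑ n, ‖x n‖ ^ 2
            = (∑ n, (x n).re ^ 2) + ∑ n, (x n).im ^ 2 := by
          rw [← Finset.sum_add_distrib]
          apply Finset.sum_congr rfl
          intro n _
          rw [Complex.sq_norm, Complex.normSq_apply]
          ring
        rw [habs]
        have hK : (0:ℝ) < 2 ^ N := by positivity
        have hprod : (0:ℝ) ≤ 2 ^ N * ((∑ n, (x n).re ^ 2) * ∑ n, (x n).im ^ 2) :=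
          mul_nonneg hK.le (mul_nonneg hA hB)
        have expand : 6 * (2:ℝ) ^ N * ((∑ n, (x n).re ^ 2) + ∑ n, (x n).im ^ 2) ^ 2
            = 2 * (3 * 2 ^ N * (∑ n, (x n).re ^ 2) ^ 2)
              + 2 * (3 * 2 ^ N * (∑ n, (x n).im ^ 2) ^ 2)
              + 12 * (2 ^ N * ((∑ n, (x n).re ^ 2) * ∑ n, (x n).im ^ 2)) := by ring
        linarith [hre, him]

lemma discrete_khintchine (N : ℕ) (x : Fin N → ℂ) :
    Real.sqrt (∑ n, ‖x n‖ ^ 2)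
      ≤ Real.sqrt 6 * ((∑ j ∈ range (2 ^ N), ‖Sc N x j‖) / 2 ^ N) := by
  set E := ∑ n, ‖x n‖ ^ 2 with hE
  set A1 := ∑ j ∈ range (2 ^ N), ‖Sc N x j‖ with hA1
  set A2 := ∑ j ∈ range (2 ^ N), ‖Sc N x j‖ ^ 2 with hA2
  set A3 := ∑ j ∈ range (2 ^ N), ‖Sc N x j‖ ^ 3 with hA3
  set A4 := ∑ j ∈ range (2 ^ N), ‖Sc N x j‖ ^ 4 with hA4
  set K : ℝ := 2 ^ N with hK
  have hKpos : (0:ℝ) < K := by positivity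
  have h2 : A2 = K * E := sum_abs_sq N x
  have h4 : A4 ≤ 6 * K * E ^ 2 := sum_abs_quartic N x
  have hEnn : 0 ≤ E := Finset.sum_nonneg fun _ _ => sq_nonneg _
  have hA1nn : 0 ≤ A1 := Finset.sum_nonneg fun _ _ => norm_nonneg _
  have cs1 : A2 ^ 2 ≤ A1 * A3 := by
    apply Finset.sum_sq_le_sum_mul_sum_of_sq_eq_mul
    · intro i _; exact norm_nonneg _
    · intro i _; positivity
    · intro i _; ring
  have cs2 : A3 ^ 2 ≤ A2 * A4 := by
    apply Finset.sum_sq_le_sum_mul_sum_of_sq_eq_mul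
    · intro i _; positivity
    · intro i _; positivity
    · intro i _; ring
  have hA2nn : 0 ≤ A2 := Finset.sum_nonneg fun _ _ => sq_nonneg _
  have hA3nn : 0 ≤ A3 := Finset.sum_nonneg fun _ _ => by positivity
  have chain : A2 ^ 4 ≤ A1 ^ 2 * (A2 * A4) := by
    calc A2 ^ 4 = (A2 ^ 2) ^ 2 := by ring
      _ ≤ (A1 * A3) ^ 2 := pow_le_pow_left₀ (sq_nonneg A2) cs1 2
      _ = A1 ^ 2 * A3 ^ 2 := by ring
      _ ≤ A1 ^ 2 * (A2 * A4) := mul_le_mul_of_nonneg_left cs2 (sq_nonneg A1)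
  have key : K ^ 2 * E ≤ 6 * A1 ^ 2 := by
    rcases eq_or_lt_of_le hEnn with h0 | hEpos
    · rw [← h0, mul_zero]; positivity
    · have hfinal : A2 ^ 4 ≤ A1 ^ 2 * (K * E * (6 * K * E ^ 2)) := by
        calc A2 ^ 4 ≤ A1 ^ 2 * (A2 * A4) := chain
          _ ≤ A1 ^ 2 * (K * E * (6 * K * E ^ 2)) := by
              apply mul_le_mul_of_nonneg_left _ (sq_nonneg A1)
              rw [h2]
              apply mul_le_mul_of_nonneg_left h4 (by positivity)
      rw [h2] at hfinal
      have hpos3 : 0 < K ^ 2 * E ^ 3 := by positivity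
      apply le_of_mul_le_mul_right _ hpos3
      calc K ^ 2 * E * (K ^ 2 * E ^ 3) = (K * E) ^ 4 := by ring
        _ ≤ A1 ^ 2 * (K * E * (6 * K * E ^ 2)) := hfinal
        _ = 6 * A1 ^ 2 * (K ^ 2 * E ^ 3) := by ring
  have hle : E ≤ (Real.sqrt 6 * (A1 / K)) ^ 2 := by
    rw [mul_pow, Real.sq_sqrt (by norm_num : (0:ℝ) ≤ 6), div_pow, ← mul_div_assoc,
      le_div_iff₀ (by positivity)]
    linarith [key]
  calc Real.sqrt E ≤ Real.sqrt ((Real.sqrt 6 * (A1 / K)) ^ 2) := Real.sqrt_le_sqrt hle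
    _ = Real.sqrt 6 * (A1 / K) := Real.sqrt_sq (by positivity)





lemma Sc_hi (N : ℕ) (x : Fin N → ℂ) (j : ℕ) : Sc N x (2 ^ N + j) = Sc N x j := by
  rw [Sc, Sc]
  apply Finset.sum_congr rfl
  intro n _
  have hn := n.2
  set d := N - 1 - n.1 with hd
  have hsplit : (2 ^ N + j) / 2 ^ d = 2 ^ (N - d) + j / 2 ^ d := by
    have : (2:ℕ) ^ N = 2 ^ d * 2 ^ (N - d) := by rw [← pow_add]; congr 1; omega
    rw [this, Nat.mul_add_div (by positivity)]
  have heven : Even (2 ^ (N - d)) := Nat.even_pow.mpr ⟨even_two, by omega⟩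
  rw [hsplit, pow_add, heven.neg_one_pow, one_mul]

set_option maxHeartbeats 1000000 in
lemma integral_eq (N : ℕ) (x : Fin N → ℂ) :
    ∫ t in (0:ℝ)..1, ‖∑ n, x n * (rademacher (n.1 + 1) t : ℂ)‖
      = (∑ j ∈ range (2 ^ (N + 1)), ‖Sc N x j‖) / 2 ^ (N + 1) := by
  have h2M : (0:ℝ) < 2 ^ (N+1) := by positivity
  set φ : ℕ → ℝ := fun j => (j : ℝ) / 2 ^ (N+1) with hφ
  have hconst : ∀ (j : ℕ) (t : ℝ), (j:ℝ)/2^(N+1) < t → t < ((j:ℝ)+1)/2^(N+1) →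
      (∑ n, x n * (rademacher (n.1 + 1) t : ℂ)) = Sc N x j := by
    intro j t h1 h2
    rw [Sc]
    apply Finset.sum_congr rfl
    intro n _
    have hr := rademacher_eq (n.1 + 1) (N+1) j (by omega) t h1 h2
    have he : N + 1 - (n.1 + 1 + 1) = N - 1 - n.1 := by omega
    rw [hr, he] at *
  have hlt : ∀ j : ℕ, φ j < φ (j+1) := by
    intro j
    apply div_lt_div_of_pos_right ?_ h2M
    exact_mod_cast Nat.lt_succ_self j
  have hae : ∀ j : ℕ, ∀ᵐ t ∂(volume : Measure ℝ),
      t ∈ Set.uIoc (φ j) (φ (j+1)) →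
        ‖∑ n, x n * (rademacher (n.1 + 1) t : ℂ)‖ = ‖Sc N x j‖ := by
    intro j
    have hnull : (volume : Measure ℝ) {φ (j+1)} = 0 := measure_singleton _
    filter_upwards [compl_mem_ae_iff.mpr hnull] with t ht hmem
    rw [Set.uIoc_of_le (hlt j).le] at hmem
    have ht2 : t < φ (j+1) := lt_of_le_of_ne hmem.2 (by simpa using ht)
    have hcast : φ (j+1) = ((j:ℝ)+1)/2^(N+1) := by rw [hφ]; push_cast; ring
    exact congrArg (fun z : ℂ => ‖z‖) (hconst j t hmem.1 (hcast ▸ ht2))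
  have hpiece : ∀ j : ℕ,
      (∫ t in φ j..φ (j+1), ‖∑ n, x n * (rademacher (n.1 + 1) t : ℂ)‖)
        = ‖Sc N x j‖ / 2 ^ (N+1) := by
    intro j
    rw [intervalIntegral.integral_congr_ae (hae j), intervalIntegral.integral_const]
    rw [hφ]
    push_cast
    rw [smul_eq_mul]
    field_simp
    ring
  have hint : ∀ k < 2 ^ (N+1), IntervalIntegrable
      (fun t => ‖∑ n, x n * (rademacher (n.1 + 1) t : ℂ)‖) volume
      (φ k) (φ (k+1)) := by
    intro k _
    apply intervalIntegrable_const.congr_ae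
    rw [Filter.EventuallyEq, ae_restrict_iff' measurableSet_uIoc]
    filter_upwards [hae k] with t ht hmem
    exact (ht hmem).symm
  have hsum := intervalIntegral.sum_integral_adjacent_intervals hint
  have hφ0 : φ 0 = 0 := by simp [hφ]
  have hφtop : φ (2 ^ (N+1)) = 1 := by
    rw [hφ]
    push_cast
    field_simp
  rw [hφ0, hφtop] at hsum
  rw [← hsum, Finset.sum_congr rfl fun j _ => hpiece j, ← Finset.sum_div]


end RadAux

/-- There is an absolute constant `C > 0` such that for all complex
`x₁, …, x_N`, `(∑ |xₙ|²)^{1/2} ≤ C * ∫₀¹ |∑ xₙ rₙ(t)| dt`, i.e.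
`‖S_N‖_{L²[0,1]} ≤ C * ‖S_N‖_{L¹[0,1]}`. -/


theorem rademacher_L2_le_L1 :
    ∃ C > (0 : ℝ), ∀ (N : ℕ) (x : Fin N → ℂ),
      Real.sqrt (∑ n, ‖x n‖ ^ 2) ≤
        C * ∫ t in (0 : ℝ)..1, ‖∑ n, x n * (rademacher (n.1 + 1) t : ℂ)‖ := by
  refine ⟨Real.sqrt 6, Real.sqrt_pos.mpr (by norm_num), ?_⟩
  intro N x
  rw [RadAux.integral_eq N x]
  have hdouble : ∑ j ∈ Finset.range (2 ^ (N+1)), ‖RadAux.Sc N x j‖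
      = 2 * ∑ j ∈ Finset.range (2 ^ N), ‖RadAux.Sc N x j‖ := by
    rw [show (2:ℕ) ^ (N+1) = 2 ^ N + 2 ^ N by ring, Finset.sum_range_add, two_mul]
    congr 1
    exact Finset.sum_congr rfl fun j _ => congrArg (fun z : ℂ => ‖z‖) (RadAux.Sc_hi N x j)
  rw [hdouble]
  calc Real.sqrt (∑ n, ‖x n‖ ^ 2)
      ≤ Real.sqrt 6 * ((∑ j ∈ Finset.range (2 ^ N), ‖RadAux.Sc N x j‖) / 2 ^ N) :=
        RadAux.discrete_khintchine N x
    _ = Real.sqrt 6 * ((2 * ∑ j ∈ Finset.range (2 ^ N), ‖RadAux.Sc N x j‖)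
          / 2 ^ (N+1)) := by
        rw [show (2:ℝ) ^ (N+1) = 2 * 2 ^ N by ring]
        field_simp

end
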